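/- For E ⊆ [0,∞), the set Ĩ_E is nonempty if and only if 0 is an accumulation point of E and p⁺(E,0) = 1. -/

import Mathlib

open Filter Set Topology ENNReal

/-- λ(E,0,h): the supremum of lengths of open subintervals of (0,h) disjoint from E. -/
noncomputable def lambda0 (E : Set ℝ) (h : ℝ) : ℝ :=
  sSup {l : ℝ | ∃ a b : ℝ, 0 ≤ a ∧ a ≤ b ∧ b ≤ h ∧ Set.Ioo a b ∩ E = ∅ ∧ l = b - a}

/-- p⁺(E,0): the right porosity of E at 0. -/
noncomputable def porosity (E : Set ℝ) : ℝ :=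
  Filter.limsup (fun h => lambda0 E h / h) (nhdsWithin 0 (Set.Ioi 0))

/-- 0 is an accumulation point of E (E ⊆ [0,∞), relative topology of [0,∞)). -/
def AccZero (E : Set ℝ) : Prop := ∀ ε > 0, ∃ x ∈ E, 0 < x ∧ x < ε

/-- (a,b) is a connected component of the exterior of E in [0,∞):
an open interval in [0,∞) disjoint from E, maximal with this property. -/
def IsCompExt (E : Set ℝ) (a b : ℝ) : Prop :=
  0 ≤ a ∧ a < b ∧ Set.Ioo a b ∩ E = ∅ ∧
  ∀ c d : ℝ, 0 ≤ c → Set.Ioo a b ⊆ Set.Ioo c d → (c, d) ≠ (a, b) → Set.Ioo c d ∩ E ≠ ∅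

/-- Membership in Ĩ_E. -/
def memIE (E : Set ℝ) (A : ℕ → ℝ × ℝ) : Prop :=
  (∀ n, 0 < (A n).1) ∧ (∀ n, IsCompExt E (A n).1 (A n).2) ∧
  Filter.Tendsto (fun n => (A n).1) Filter.atTop (nhds 0) ∧
  Filter.Tendsto (fun n => ((A n).2 - (A n).1) / (A n).2) Filter.atTop (nhds 1)

/-- Almost decreasing sequence: eventually nonincreasing. -/
def AlmostDecr (τ : ℕ → ℝ) : Prop := ∀ᶠ n in Filter.atTop, τ (n + 1) ≤ τ n

/-- Membership in Ẽ₀^d: almost decreasing sequences in E∖{0} tending to 0. -/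
def memE0d (E : Set ℝ) (τ : ℕ → ℝ) : Prop :=
  AlmostDecr τ ∧ Filter.Tendsto τ Filter.atTop (nhds 0) ∧ ∀ n, τ n ∈ E \ {0}

/-- Weak equivalence ≍ of sequences: c₁ aₙ ≤ γₙ ≤ c₂ aₙ for large n. -/
def SeqEquiv (a γ : ℕ → ℝ) : Prop :=
  ∃ c₁ c₂ : ℝ, 0 < c₁ ∧ 0 < c₂ ∧ ∀ᶠ n in Filter.atTop, c₁ * a n ≤ γ n ∧ γ n ≤ c₂ * a n

/-- E is τ̃-strongly porous. -/
def StronglyPorousWrt (E : Set ℝ) (τ : ℕ → ℝ) : Prop :=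
  ∃ A : ℕ → ℝ × ℝ, memIE E A ∧ SeqEquiv (fun n => (A n).1) τ

/-- E is completely strongly porous at 0. -/
def CSP (E : Set ℝ) : Prop := ∀ τ : ℕ → ℝ, memE0d E τ → StronglyPorousWrt E τ

/-- Membership in Ĩ_E^d: first coordinates almost decreasing. -/
def memIEd (E : Set ℝ) (A : ℕ → ℝ × ℝ) : Prop := memIE E A ∧ AlmostDecr (fun n => (A n).1)

/-- Membership in Ĩ_E^{sd}: first coordinates eventually strictly decreasing. -/
def memIEsd (E : Set ℝ) (A : ℕ → ℝ × ℝ) : Prop :=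
  memIE E A ∧ ∀ᶠ n in Filter.atTop, (A (n + 1)).1 < (A n).1

/-- The preorder Ã ⪯ L̃. -/
def Prec (A L : ℕ → ℝ × ℝ) : Prop :=
  ∃ N₁ : ℕ, ∃ f : ℕ → ℕ, ∀ n ≥ N₁, (A n).1 = (L (f n)).1

/-- L̃ is universal: every Ã ∈ Ĩ_E^d satisfies Ã ⪯ L̃. -/
def Universal (E : Set ℝ) (L : ℕ → ℝ × ℝ) : Prop :=
  ∀ A : ℕ → ℝ × ℝ, memIEd E A → Prec A L

/-- M(L̃) = limsup lₙ/mₙ₊₁ (in [0,∞]). -/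
noncomputable def Mq (L : ℕ → ℝ × ℝ) : ℝ≥0∞ :=
  Filter.limsup (fun n => ENNReal.ofReal ((L n).1 / (L (n + 1)).2)) Filter.atTop

/-- C(τ̃) = inf over {(aₙ,bₙ)} ∈ Ĩ_E with τₙ ≤ aₙ eventually of limsup aₙ/τₙ. -/
noncomputable def Cseq (E : Set ℝ) (τ : ℕ → ℝ) : ℝ≥0∞ :=
  ⨅ (A : ℕ → ℝ × ℝ) (_ : memIE E A ∧ ∀ᶠ n in Filter.atTop, τ n ≤ (A n).1),
    Filter.limsup (fun n => ENNReal.ofReal ((A n).1 / τ n)) Filter.atTop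

/-- C_E = sup over τ̃ ∈ Ẽ₀^d of C(τ̃). -/
noncomputable def CE (E : Set ℝ) : ℝ≥0∞ := ⨆ (τ : ℕ → ℝ) (_ : memE0d E τ), Cseq E τ

/-- E is uniformly strongly porous at 0. -/
def USP (E : Set ℝ) : Prop :=
  ∃ c : ℝ, 0 < c ∧ ∀ τ : ℕ → ℝ, memE0d E τ → ∃ A : ℕ → ℝ × ℝ, memIE E A ∧
    (∀ᶠ n in Filter.atTop, τ n ≤ (A n).1) ∧
    Filter.limsup (fun n => ENNReal.ofReal ((A n).1 / τ n)) Filter.atTop ≤ ENNReal.ofReal c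

-- helper lemmas
lemma lambda0_bdd (E : Set ℝ) (h : ℝ) :
    BddAbove {l : ℝ | ∃ a b : ℝ, 0 ≤ a ∧ a ≤ b ∧ b ≤ h ∧ Set.Ioo a b ∩ E = ∅ ∧ l = b - a} := by
  refine ⟨h, fun l hl => ?_⟩
  obtain ⟨a, b, ha, hab, hbh, -, rfl⟩ := hl
  linarith

lemma lambda0_ne (E : Set ℝ) {h : ℝ} (hh : 0 ≤ h) :
    (0 : ℝ) ∈ {l : ℝ | ∃ a b : ℝ, 0 ≤ a ∧ a ≤ b ∧ b ≤ h ∧ Set.Ioo a b ∩ E = ∅ ∧ l = b - a} :=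
  ⟨0, 0, le_refl _, le_refl _, hh, by simp, by ring⟩

lemma lambda0_ge (E : Set ℝ) {a b h : ℝ} (ha : 0 ≤ a) (hab : a ≤ b) (hbh : b ≤ h)
    (hd : Set.Ioo a b ∩ E = ∅) : b - a ≤ lambda0 E h :=
  le_csSup (lambda0_bdd E h) ⟨a, b, ha, hab, hbh, hd, rfl⟩

lemma lambda0_nonneg (E : Set ℝ) {h : ℝ} (hh : 0 ≤ h) : 0 ≤ lambda0 E h :=
  le_csSup (lambda0_bdd E h) (lambda0_ne E hh)

lemma lambda0_le (E : Set ℝ) {h : ℝ} (hh : 0 ≤ h) : lambda0 E h ≤ h := by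
  refine csSup_le ⟨0, lambda0_ne E hh⟩ fun l hl => ?_
  obtain ⟨a, b, ha, hab, hbh, -, rfl⟩ := hl
  linarith

lemma porosity_le_one_aux (E : Set ℝ) :
    (∀ᶠ h in nhdsWithin (0:ℝ) (Set.Ioi 0), lambda0 E h / h ≤ 1) := by
  filter_upwards [self_mem_nhdsWithin] with h (hh : (0:ℝ) < h)
  rw [div_le_one hh]
  exact lambda0_le E hh.le

lemma porosity_nonneg_aux (E : Set ℝ) :
    (∀ᶠ h in nhdsWithin (0:ℝ) (Set.Ioi 0), 0 ≤ lambda0 E h / h) := by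
  filter_upwards [self_mem_nhdsWithin] with h (hh : (0:ℝ) < h)
  exact div_nonneg (lambda0_nonneg E hh.le) hh.le

theorem stmt1 (E : Set ℝ) (hE : E ⊆ Set.Ici 0) :
    (∃ A : ℕ → ℝ × ℝ, memIE E A) ↔ (AccZero E ∧ porosity E = 1) := by
  constructor
  · rintro ⟨A, hpos, hce, ha0, hba⟩
    have hab : ∀ n, (A n).1 < (A n).2 := fun n => (hce n).2.1
    have hb0 : ∀ n, (0:ℝ) < (A n).2 := fun n => (hpos n).trans (hab n)
    have hratio : Tendsto (fun n => (A n).1 / (A n).2) atTop (nhds 0) := by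
      have heq : (fun n => (A n).1 / (A n).2)
          = fun n => 1 - ((A n).2 - (A n).1) / (A n).2 := by
        funext n
        have hb := (hb0 n).ne'
        field_simp
        ring
      rw [heq]
      have h1 : Tendsto (fun _ : ℕ => (1:ℝ)) atTop (nhds 1) := tendsto_const_nhds
      have h2 := h1.sub hba
      simpa using h2
    have hAcc : AccZero E := by
      intro ε hε
      obtain ⟨n, hn⟩ := (ha0.eventually (eventually_lt_nhds hε)).exists
      have hmax := (hce n).2.2.2 ((A n).1 / 2) (A n).2 (by linarith [hpos n])
        (Set.Ioo_subset_Ioo (by linarith [hpos n]) le_rfl)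
        (by
          intro hpair
          have : (A n).1 / 2 = (A n).1 := congrArg Prod.fst hpair
          linarith [hpos n])
      obtain ⟨x, hx, hxE⟩ := Set.nonempty_iff_ne_empty.mpr hmax
      have hxa : x ≤ (A n).1 := by
        by_contra hgt
        push_neg at hgt
        have : x ∈ Set.Ioo (A n).1 (A n).2 ∩ E := ⟨⟨hgt, hx.2⟩, hxE⟩
        rw [(hce n).2.2.1] at this
        exact this
      exact ⟨x, hxE, lt_of_le_of_lt (by linarith [hpos n] : (0:ℝ) ≤ (A n).1 / 2) hx.1,
        lt_of_le_of_lt hxa hn⟩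
    refine ⟨hAcc, ?_⟩
    -- porosity = 1
    have hbdd : IsBoundedUnder (· ≤ ·) (nhdsWithin (0:ℝ) (Set.Ioi 0))
        (fun h => lambda0 E h / h) := ⟨1, porosity_le_one_aux E⟩
    have hub : porosity E ≤ 1 :=
      Filter.limsup_le_of_le
        (Filter.isCoboundedUnder_le_of_eventually_le _ (porosity_nonneg_aux E))
        (porosity_le_one_aux E)
    have hlb : ∀ ε : ℝ, 0 < ε → 1 - ε ≤ porosity E := by
      intro ε hε
      refine Filter.le_limsup_of_frequently_le ?_ hbdd
      rw [Filter.frequently_iff]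
      intro U hU
      obtain ⟨δ, hδ, hsub⟩ := mem_nhdsGT_iff_exists_Ioc_subset.mp hU
      rw [Set.mem_Ioi] at hδ
      have hev : ∀ᶠ n in atTop, (A n).1 < min δ (ε * δ) ∧ (A n).1 / (A n).2 ≤ ε := by
        filter_upwards [ha0.eventually (eventually_lt_nhds
            (lt_min hδ (mul_pos hε hδ))),
          hratio.eventually (eventually_le_nhds hε)] with n h1 h2
        exact ⟨h1, h2⟩
      obtain ⟨n, hn1, hn2⟩ := hev.exists
      set h : ℝ := min (A n).2 δ with hh
      have hh0 : 0 < h := lt_min (hb0 n) hδ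
      have hah : (A n).1 < h := lt_min (hab n) (lt_of_lt_of_le hn1 (min_le_left _ _))
      refine ⟨h, hsub ⟨hh0, min_le_right _ _⟩, ?_⟩
      have hgap : Set.Ioo (A n).1 h ∩ E = ∅ := by
        have : Set.Ioo (A n).1 h ∩ E ⊆ Set.Ioo (A n).1 (A n).2 ∩ E :=
          Set.inter_subset_inter_left _ (Set.Ioo_subset_Ioo le_rfl (min_le_left _ _))
        rw [(hce n).2.2.1] at this
        exact Set.subset_empty_iff.mp this
      have hlam : h - (A n).1 ≤ lambda0 E h :=
        lambda0_ge E (hpos n).le hah.le le_rfl hgap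
      have hdiv : (A n).1 / h ≤ ε := by
        rcases le_total (A n).2 δ with hc | hc
        · have : h = (A n).2 := min_eq_left hc
          rw [this]
          exact hn2
        · have hhδ : h = δ := min_eq_right hc
          rw [hhδ, div_le_iff₀ hδ]
          have := lt_of_lt_of_le hn1 (min_le_right _ _)
          linarith
      have : 1 - ε ≤ (h - (A n).1) / h := by
        rw [sub_div, div_self (ne_of_gt hh0)]
        linarith
      exact le_trans this ((div_le_div_iff_of_pos_right hh0).mpr hlam)
    by_contra hne
    have hlt : porosity E < 1 := lt_of_le_of_ne hub hne
    have := hlb ((1 - porosity E) / 2) (by linarith)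
    linarith
  · rintro ⟨hAcc, hpor⟩
    obtain ⟨x₀, hx₀E, hx₀, -⟩ := hAcc 1 one_pos
    have freq : ∀ ε : ℝ, 0 < ε → ∀ δ : ℝ, 0 < δ →
        ∃ h : ℝ, 0 < h ∧ h ≤ δ ∧ (1 - ε) * h < lambda0 E h := by
      intro ε hε δ hδ
      by_contra hcon
      push_neg at hcon
      have hev : ∀ᶠ h in nhdsWithin (0:ℝ) (Set.Ioi 0), lambda0 E h / h ≤ 1 - ε := by
        filter_upwards [Ioc_mem_nhdsGT hδ] with h hh
        rw [div_le_iff₀ hh.1]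
        exact hcon h hh.1 hh.2
      have hle : porosity E ≤ 1 - ε :=
        Filter.limsup_le_of_le
          (Filter.isCoboundedUnder_le_of_eventually_le _ (porosity_nonneg_aux E)) hev
      rw [hpor] at hle
      linarith
    have key : ∀ n : ℕ, ∃ p : ℝ × ℝ, 0 < p.1 ∧ IsCompExt E p.1 p.2 ∧
        p.1 ≤ 1 / (n + 1) ∧ p.1 / p.2 ≤ 2 / (n + 2) := by
      intro n
      have hn2 : (0:ℝ) < 1 / ((n:ℝ) + 2) := by positivity
      have hn3 : (0:ℝ) < 1 / ((n:ℝ) + 3) := by positivity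
      have hδ0 : (0:ℝ) < min (1 / ((n:ℝ) + 1)) (x₀ / 2) := by
        refine lt_min (by positivity) (by linarith)
      obtain ⟨h, hh0, hhδ, hlam⟩ := freq (1 / ((n:ℝ) + 3)) hn3 _ hδ0
      have hmono : (1 - 1 / ((n:ℝ) + 2)) * h < lambda0 E h := by
        refine lt_of_le_of_lt ?_ hlam
        have : 1 / ((n:ℝ) + 3) ≤ 1 / ((n:ℝ) + 2) := by
          apply one_div_le_one_div_of_le <;> linarith
        nlinarith
      obtain ⟨l, hl, hlgt⟩ := exists_lt_of_lt_csSup ⟨0, lambda0_ne E hh0.le⟩ hmono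
      obtain ⟨α, β, hα, hαβ, hβh, hgap, rfl⟩ := hl
      set u : ℝ := 1 / ((n:ℝ) + 2) with hu
      have hu1 : u ≤ 1 / 2 := by
        rw [hu]
        apply one_div_le_one_div_of_le <;> linarith
      have hαlt : α < h * u := by nlinarith
      have hβgt : h / 2 ≤ β := by nlinarith
      set t : ℝ := (α + β) / 2 with ht
      have hαt : α < t := by
        have : (1 - u) * h > 0 := by nlinarith
        simp only [ht]
        linarith [hlgt]
      have htβ : t < β := by
        simp only [ht]
        linarith [hαt]
      have ht0 : 0 < t := lt_of_le_of_lt hα hαt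
      have hx₀t : t < x₀ := by
        have h1 : h ≤ x₀ / 2 := le_trans hhδ (min_le_right _ _)
        linarith [htβ.trans_le (hβh.trans h1)]
      -- the right endpoint
      have hSbne : (E ∩ Set.Ici t).Nonempty := ⟨x₀, hx₀E, hx₀t.le⟩
      have hSbbd : BddBelow (E ∩ Set.Ici t) := ⟨t, fun y hy => hy.2⟩
      set b : ℝ := sInf (E ∩ Set.Ici t) with hbdef
      have hβb : β ≤ b := by
        refine le_csInf hSbne fun y hy => ?_
        by_contra hlt
        push_neg at hlt
        have : y ∈ Set.Ioo α β ∩ E := ⟨⟨lt_of_lt_of_le hαt hy.2, hlt⟩, hy.1⟩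
        rw [hgap] at this
        exact this
      -- the left endpoint
      have hSane : (insert 0 E ∩ Set.Iic t).Nonempty := ⟨0, Set.mem_insert _ _, ht0.le⟩
      have hSabd : BddAbove (insert 0 E ∩ Set.Iic t) := ⟨t, fun y hy => hy.2⟩
      set a : ℝ := sSup (insert 0 E ∩ Set.Iic t) with hadef
      have haα : a ≤ α := by
        refine csSup_le hSane fun y hy => ?_
        rcases hy.1 with rfl | hyE
        · exact hα
        · by_contra hlt
          push_neg at hlt
          have : y ∈ Set.Ioo α β ∩ E := ⟨⟨hlt, lt_of_le_of_lt hy.2 htβ⟩, hyE⟩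
          rw [hgap] at this
          exact this
      have ha0 : 0 < a := by
        obtain ⟨x, hxE, hx0, hxt⟩ := hAcc t ht0
        exact lt_of_lt_of_le hx0 (le_csSup hSabd ⟨Set.mem_insert_of_mem _ hxE, hxt.le⟩)
      have hab : a < b := lt_of_le_of_lt haα (lt_of_lt_of_le (hαt.trans htβ) hβb)
      have hgap2 : Set.Ioo a b ∩ E = ∅ := by
        rw [Set.eq_empty_iff_forall_notMem]
        rintro x ⟨⟨hax, hxb⟩, hxE⟩
        rcases le_or_gt x t with hxt | htx
        · exact absurd (le_csSup hSabd ⟨Set.mem_insert_of_mem _ hxE, hxt⟩) (not_le.mpr hax)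
        · exact absurd (csInf_le hSbbd ⟨hxE, htx.le⟩) (not_le.mpr hxb)
      have htb : t < b := lt_of_lt_of_le htβ hβb
      have hat : a < t := lt_of_le_of_lt haα hαt
      refine ⟨(a, b), ha0, ⟨ha0.le, hab, hgap2, ?_⟩, ?_, ?_⟩
      · -- maximality
        intro c d hc hsub hne
        rw [Set.Ioo_subset_Ioo_iff hab] at hsub
        obtain ⟨hca, hbd⟩ := hsub
        rcases lt_or_eq_of_le hca with hlt | heq
        · obtain ⟨y, hy, hcy⟩ := exists_lt_of_lt_csSup hSane hlt
          rcases hy.1 with rfl | hyE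
          · exact absurd hc (not_le.mpr hcy)
          · intro hemp
            have : y ∈ Set.Ioo c d ∩ E :=
              ⟨⟨hcy, lt_of_le_of_lt hy.2 (lt_of_lt_of_le htb hbd)⟩, hyE⟩
            rw [hemp] at this
            exact this
        · have hbd' : b < d := by
            rcases lt_or_eq_of_le hbd with h' | h'
            · exact h'
            · exact absurd (by rw [heq, ← h'] : (c, d) = (a, b)) hne
          obtain ⟨y, hy, hyd⟩ := exists_lt_of_csInf_lt hSbne hbd'
          intro hemp
          have hct : c < t := by rw [heq]; exact hat
          have : y ∈ Set.Ioo c d ∩ E := ⟨⟨lt_of_lt_of_le hct hy.2, hyd⟩, hy.1⟩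
          rw [hemp] at this
          exact this
      · -- a ≤ 1/(n+1)
        have : h ≤ 1 / ((n:ℝ) + 1) := le_trans hhδ (min_le_left _ _)
        calc a ≤ α := haα
          _ ≤ β := hαβ
          _ ≤ h := hβh
          _ ≤ 1 / ((n:ℝ) + 1) := this
      · -- a / b ≤ 2/(n+2)
        have h1 : a / b ≤ α / β := by
          apply div_le_div₀ hα haα (by linarith : (0:ℝ) < β) hβb
        have h2 : α / β ≤ (h * u) / (h / 2) := by
          apply div_le_div₀ (by positivity) hαlt.le (by linarith) hβgt
        have h3 : (h * u) / (h / 2) = 2 * u := by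
          field_simp
        calc a / b ≤ α / β := h1
          _ ≤ (h * u) / (h / 2) := h2
          _ = 2 * u := h3
          _ = 2 / ((n:ℝ) + 2) := by rw [hu]; ring
    choose p hp1 hp2 hp3 hp4 using key
    refine ⟨p, hp1, hp2, ?_, ?_⟩
    · -- aₙ → 0
      refine squeeze_zero (fun n => (hp1 n).le) hp3 ?_
      exact tendsto_one_div_add_atTop_nhds_zero_nat
    · -- (b-a)/b → 1
      have hb0 : ∀ n, (0:ℝ) < (p n).2 := fun n => (hp1 n).trans (hp2 n).2.1
      have hratio : Tendsto (fun n => (p n).1 / (p n).2) atTop (nhds 0) := by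
        refine squeeze_zero (fun n => div_nonneg (hp1 n).le (hb0 n).le) hp4 ?_
        have h1 : Tendsto (fun n : ℕ => 2 * (1 / ((n:ℝ) + 1))) atTop (nhds (2 * 0)) :=
          tendsto_one_div_add_atTop_nhds_zero_nat.const_mul 2
        rw [mul_zero] at h1
        have hg : Tendsto (fun n : ℕ => ((n:ℝ) + 2)) atTop atTop :=
          tendsto_atTop_add_const_right _ 2 tendsto_natCast_atTop_atTop
        exact hg.const_div_atTop 2
      have heq : (fun n => ((p n).2 - (p n).1) / (p n).2)
          = fun n => 1 - (p n).1 / (p n).2 := by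
        funext n
        have hb := (hb0 n).ne'
        field_simp
      rw [heq]
      have h1 : Tendsto (fun _ : ℕ => (1:ℝ)) atTop (nhds 1) := tendsto_const_nhds
      have h2 := h1.sub hratio
      simpa using h2
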